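/- arXiv:2206.01890 — 2 statements merged into one kernel-verified Lean document; each statement's English description precedes it below -/
import Mathlib

section
/- For any A > 0 and β ∈ ℝ, the initial value problem F'' / (1 + (F')²/A⁴) + F'/ζ = β on (0, ∞), with F(0) = F'(0) = 0 and F extended continuously to 0, has at most one C² solution on any interval [0, R]. -/
open Set Filter Real Topology

/-- `F` is a C² solution on `[0, R]` of the bowl-soliton ODE
`F''/(1 + (F')²/A⁴) + F'/ζ = β` with `F(0) = F'(0) = 0`. -/
def IsBowlSolution (A β R : ℝ) (F : ℝ → ℝ) : Prop :=
  ContDiffOn ℝ 2 F (Set.Icc 0 R) ∧ F 0 = 0 ∧ deriv F 0 = 0 ∧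
    ∀ ζ ∈ Set.Ioc (0 : ℝ) R,
      deriv (deriv F) ζ / (1 + (deriv F ζ) ^ 2 / A ^ 4) + deriv F ζ / ζ = β

/-- The auxiliary function `g(v) = A² arctan(v/A²)`, a bounded primitive of
`1/(1 + v²/A⁴)`. -/
noncomputable def gB (A v : ℝ) : ℝ := A^2 * Real.arctan (v / A^2)

lemma hasDerivAt_gB {A : ℝ} (hA : 0 < A) (v : ℝ) :
    HasDerivAt (gB A) (1 / (1 + v^2 / A^4)) v := by
  have hA2 : (A:ℝ)^2 ≠ 0 := by positivity
  have h1 : HasDerivAt (fun w : ℝ => w / A^2) (1 / A^2) v := by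
    simpa using (hasDerivAt_id v).div_const (A^2)
  have h2 := (Real.hasDerivAt_arctan (v / A^2)).comp v h1
  have h3 := h2.const_mul (A^2)
  refine h3.congr_deriv ?_
  have hD : (0:ℝ) < 1 + v^2/A^4 := by positivity
  have hD2 : (0:ℝ) < 1 + (v/A^2)^2 := by positivity
  field_simp

lemma abs_gB_lt {A : ℝ} (hA : 0 < A) (v : ℝ) : |gB A v| < A^2 * (π/2) := by
  have hA2 : (0:ℝ) < A^2 := by positivity
  have := Real.arctan_lt_pi_div_two (v / A^2)
  have h2 := Real.neg_pi_div_two_lt_arctan (v / A^2)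
  rw [gB, abs_mul, abs_of_pos hA2]
  have : |Real.arctan (v / A^2)| < π/2 := abs_lt.2 ⟨h2, this⟩
  exact (mul_lt_mul_iff_right₀ hA2).2 this

lemma gB_strictMono {A : ℝ} (hA : 0 < A) : StrictMono (gB A) := by
  have hA2 : (0:ℝ) < A^2 := by positivity
  intro a b hab
  exact mul_lt_mul_of_pos_left
    (Real.arctan_strictMono (div_lt_div_of_pos_right hab hA2)) hA2

lemma hasDerivAt_gB_comp {A : ℝ} (hA : 0 < A) {u : ℝ → ℝ} {x b : ℝ}
    (hu : HasDerivAt u (b * (1 + (u x)^2 / A^4)) x) :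
    HasDerivAt (fun t => gB A (u t)) b x := by
  have := (hasDerivAt_gB hA (u x)).comp x hu
  refine this.congr_deriv ?_
  have hD : (0:ℝ) < 1 + (u x)^2/A^4 := by positivity
  field_simp

/-- If a continuous function `u` on `[0,R]` satisfies the (rewritten) bowl ODE
on `(0,R)`, then it cannot start at a positive value: otherwise the integrated
equation forces `g(u)` to blow up logarithmically near `0`, contradicting the
boundedness of `g`. -/
lemma u0_nonpos (A β R : ℝ) (hA : 0 < A) (hR : 0 < R) (u : ℝ → ℝ)
    (hcont : ContinuousOn u (Set.Icc 0 R))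
    (hode : ∀ ζ ∈ Set.Ioo (0:ℝ) R,
      HasDerivAt u ((β - u ζ / ζ) * (1 + (u ζ)^2 / A^4)) ζ) :
    u 0 ≤ 0 := by
  by_contra hc
  push_neg at hc
  set c := u 0 with hc_def
  have hmem : Set.Ioi (c/2) ∈ 𝓝 c := Ioi_mem_nhds (by linarith)
  have h0m : (0:ℝ) ∈ Set.Icc 0 R := Set.left_mem_Icc.mpr hR.le
  have hpre : u ⁻¹' Set.Ioi (c/2) ∈ 𝓝[Set.Icc 0 R] (0:ℝ) := (hcont 0 h0m) hmem
  obtain ⟨ε, hε, hball⟩ := Metric.mem_nhdsWithin_iff.mp hpre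
  set δ : ℝ := min (ε/2) (R/2) with hδ_def
  have hδ0 : 0 < δ := lt_min (by linarith) (by linarith)
  have hδR : δ < R := lt_of_le_of_lt (min_le_right _ _) (by linarith)
  have hδε : δ < ε := lt_of_le_of_lt (min_le_left _ _) (by linarith)
  have hu_big : ∀ s ∈ Set.Ioc (0:ℝ) δ, c/2 < u s := by
    intro s hs
    apply hball
    constructor
    · simp only [Metric.mem_ball, Real.dist_eq, sub_zero]
      rw [abs_of_pos hs.1]; exact lt_of_le_of_lt hs.2 hδε
    · exact ⟨hs.1.le, hs.2.trans hδR.le⟩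
  set ψ : ℝ → ℝ := fun t => gB A (u t) - β * t + (c/2) * Real.log t with hψ_def
  have hanti : ∀ ε', 0 < ε' → ε' ≤ δ → ψ δ ≤ ψ ε' := by
    intro ε' hε'0 hε'δ
    rcases eq_or_lt_of_le hε'δ with h | h
    · rw [h]
    have hasAt : ∀ x ∈ Set.Ioo ε' δ, HasDerivAt ψ ((c/2 - u x)/x) x := by
      intro x hx
      have hx0 : 0 < x := lt_trans hε'0 hx.1
      have hxR : x ∈ Set.Ioo (0:ℝ) R := ⟨hx0, hx.2.trans hδR⟩
      have h1 := hode x hxR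
      have hD : (0:ℝ) < 1 + (u x)^2 / A^4 := by positivity
      have h2 : HasDerivAt (fun t => gB A (u t)) (β - u x / x) x :=
        hasDerivAt_gB_comp hA h1
      have h3 : HasDerivAt (fun t : ℝ => β * t) β x := by
        simpa using (hasDerivAt_id x).const_mul β
      have h4 : HasDerivAt (fun t : ℝ => (c/2) * Real.log t) ((c/2) * x⁻¹) x :=
        (Real.hasDerivAt_log hx0.ne').const_mul (c/2)
      have := (h2.sub h3).add h4
      refine this.congr_deriv ?_
      field_simp
      ring
    have hcont' : ContinuousOn ψ (Set.Icc ε' δ) := by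
      apply ContinuousOn.add
      · apply ContinuousOn.sub
        · exact ((continuous_const.mul
            (Real.continuous_arctan.comp (continuous_id.div_const _))).comp_continuousOn
            (hcont.mono (fun y hy => ⟨le_trans hε'0.le hy.1, hy.2.trans hδR.le⟩)))
        · exact (continuous_const.mul continuous_id).continuousOn
      · exact ContinuousOn.mul continuousOn_const
          (Real.continuousOn_log.mono (fun y hy => by
            simp only [Set.mem_compl_iff, Set.mem_singleton_iff]
            exact ne_of_gt (lt_of_lt_of_le hε'0 hy.1)))
    have := antitoneOn_of_deriv_nonpos (convex_Icc ε' δ) hcont'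
      (by
        rw [interior_Icc]
        intro x hx
        exact ((hasAt x hx).differentiableAt).differentiableWithinAt)
      (by
        rw [interior_Icc]
        intro x hx
        rw [(hasAt x hx).deriv]
        have hx0 : 0 < x := lt_trans hε'0 hx.1
        have := hu_big x ⟨hx0, hx.2.le⟩
        apply div_nonpos_of_nonpos_of_nonneg (by linarith) hx0.le)
    exact this (Set.left_mem_Icc.mpr hε'δ) (Set.right_mem_Icc.mpr hε'δ) hε'δ
  have hlow : ∀ ε', 0 < ε' → ε' ≤ δ →
      ψ δ - |β| * δ - (c/2) * Real.log ε' ≤ gB A (u ε') := by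
    intro ε' h1 h2
    have := hanti ε' h1 h2
    have hβ : β * ε' ≥ -(|β| * δ) := by
      have h3 : |β * ε'| ≤ |β| * δ := by
        rw [abs_mul, abs_of_pos h1]
        exact mul_le_mul_of_nonneg_left h2 (abs_nonneg β)
      nlinarith [neg_abs_le (β * ε')]
    simp only [hψ_def] at this ⊢
    linarith
  have htend : Tendsto (fun t => ψ δ - |β| * δ - (c/2) * Real.log t) (𝓝[>] (0:ℝ)) atTop := by
    have h1 : Tendsto (fun t => -(c/2) * Real.log t) (𝓝[>] (0:ℝ)) atTop :=
      (tendsto_const_mul_atTop_of_neg (by linarith)).mpr Real.tendsto_log_nhdsGT_zero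
    have h2 := tendsto_atTop_add_const_left _ (ψ δ - |β| * δ) h1
    refine h2.congr (fun t => by ring)
  have hev1 : ∀ᶠ t in 𝓝[>] (0:ℝ), A^2 * (π/2) < ψ δ - |β| * δ - (c/2) * Real.log t :=
    htend.eventually_gt_atTop _
  have hev2 : ∀ᶠ t in 𝓝[>] (0:ℝ), t ≤ δ := by
    apply eventually_nhdsWithin_of_eventually_nhds
    filter_upwards [Iic_mem_nhds hδ0] with t ht
    exact ht
  have hev3 : ∀ᶠ t in 𝓝[>] (0:ℝ), (0:ℝ) < t := eventually_mem_nhdsWithin.mono fun x hx => hx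
  obtain ⟨t, ht1, ht2, ht3⟩ := (hev1.and (hev2.and hev3)).exists
  have := hlow t ht3 ht2
  have := abs_gB_lt hA (u t)
  have habs : gB A (u t) ≤ |gB A (u t)| := le_abs_self _
  linarith

/-- Basic consequences of being a bowl solution, stated for the within-derivative
`u = derivWithin F (Icc 0 R)`: `u` is continuous on `[0,R]`, and on `(0,R)` both
`u` and `F` are differentiable with the ODE satisfied. -/
lemma sol_props (A β R : ℝ) (hA : 0 < A) (hR : 0 < R) (F : ℝ → ℝ)
    (h : IsBowlSolution A β R F) :
    ContinuousOn (derivWithin F (Set.Icc 0 R)) (Set.Icc 0 R) ∧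
    (∀ x ∈ Set.Ioo (0:ℝ) R,
      HasDerivAt (derivWithin F (Set.Icc 0 R))
        ((β - derivWithin F (Set.Icc 0 R) x / x) *
          (1 + (derivWithin F (Set.Icc 0 R) x)^2 / A^4)) x ∧
      HasDerivAt F (derivWithin F (Set.Icc 0 R) x) x) := by
  obtain ⟨hF, hF0, hF'0, hode⟩ := h
  have hud : UniqueDiffOn ℝ (Set.Icc (0:ℝ) R) := uniqueDiffOn_Icc hR
  set u := derivWithin F (Set.Icc 0 R) with hu_def
  have hucont : ContinuousOn u (Set.Icc 0 R) := hF.continuousOn_derivWithin hud one_le_two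
  refine ⟨hucont, fun x hx => ?_⟩
  have hnhds : Set.Icc (0:ℝ) R ∈ 𝓝 x := Icc_mem_nhds hx.1 hx.2
  have heq : u =ᶠ[𝓝 x] deriv F := by
    filter_upwards [Ioo_mem_nhds hx.1 hx.2] with y hy
    exact derivWithin_of_mem_nhds (Icc_mem_nhds hy.1 hy.2)
  have hcd : ContDiffAt ℝ 2 F x := hF.contDiffAt hnhds
  have hFd : DifferentiableAt ℝ F x := hcd.differentiableAt (by norm_num)
  have hux : u x = deriv F x := derivWithin_of_mem_nhds hnhds
  have hu1 : ContDiffOn ℝ 1 u (Set.Icc 0 R) := by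
    have := (contDiffOn_succ_iff_derivWithin hud).1
      (hF.of_le (le_refl _) : ContDiffOn ℝ (1+1) F (Set.Icc 0 R))
    exact this.2.2
  have hudiff : DifferentiableAt ℝ u x :=
    ((hu1.contDiffAt hnhds).differentiableAt (by norm_num))
  have hder : HasDerivAt u (deriv u x) x := hudiff.hasDerivAt
  have hderiv_eq : deriv u x = deriv (deriv F) x := heq.deriv_eq
  have hD : (0:ℝ) < 1 + (deriv F x)^2 / A^4 := by positivity
  have hode' := hode x ⟨hx.1, hx.2.le⟩
  have hdd : deriv (deriv F) x = (β - deriv F x / x) * (1 + (deriv F x)^2 / A^4) := by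
    have h5 : deriv (deriv F) x / (1 + (deriv F x)^2 / A^4) = β - deriv F x / x := by
      linarith [hode']
    exact (div_eq_iff (ne_of_gt hD)).mp h5
  constructor
  · rw [hux]
    rw [hderiv_eq, hdd] at hder
    exact hder
  · rw [hux]
    exact hFd.hasDerivAt

theorem stmt_4 (A β R : ℝ) (hA : 0 < A) (hR : 0 < R) (F₁ F₂ : ℝ → ℝ)
    (h₁ : IsBowlSolution A β R F₁) (h₂ : IsBowlSolution A β R F₂) :
    Set.EqOn F₁ F₂ (Set.Icc 0 R) := by
  set u₁ := derivWithin F₁ (Set.Icc 0 R) with hu₁_def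
  set u₂ := derivWithin F₂ (Set.Icc 0 R) with hu₂_def
  obtain ⟨hc₁, hp₁⟩ := sol_props A β R hA hR F₁ h₁
  obtain ⟨hc₂, hp₂⟩ := sol_props A β R hA hR F₂ h₂
  -- u i 0 = 0
  have hzero : ∀ (u : ℝ → ℝ), ContinuousOn u (Set.Icc 0 R) →
      (∀ x ∈ Set.Ioo (0:ℝ) R,
        HasDerivAt u ((β - u x / x) * (1 + (u x)^2 / A^4)) x) → u 0 = 0 := by
    intro u hc hode
    have a1 := u0_nonpos A β R hA hR u hc hode
    have a2 := u0_nonpos A (-β) R hA hR (fun t => -(u t)) hc.neg (by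
      intro x hx
      have := (hode x hx).neg
      refine this.congr_deriv ?_
      ring)
    linarith
  have hz₁ : u₁ 0 = 0 := hzero u₁ hc₁ (fun x hx => (hp₁ x hx).1)
  have hz₂ : u₂ 0 = 0 := hzero u₂ hc₂ (fun x hx => (hp₂ x hx).1)
  -- the squared difference of g ∘ u is antitone
  set φ : ℝ → ℝ := fun t => (gB A (u₁ t) - gB A (u₂ t))^2 with hφ_def
  have hφcont : ContinuousOn φ (Set.Icc 0 R) := by
    apply ContinuousOn.pow
    apply ContinuousOn.sub
    · exact (continuous_const.mul
        (Real.continuous_arctan.comp (continuous_id.div_const _))).comp_continuousOn hc₁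
    · exact (continuous_const.mul
        (Real.continuous_arctan.comp (continuous_id.div_const _))).comp_continuousOn hc₂
  have hφdiff : ∀ x ∈ Set.Ioo (0:ℝ) R,
      HasDerivAt φ (2 * (gB A (u₁ x) - gB A (u₂ x)) ^ 1 *
        ((β - u₁ x / x) - (β - u₂ x / x))) x := by
    intro x hx
    have hg₁ : HasDerivAt (fun t => gB A (u₁ t)) (β - u₁ x / x) x :=
      hasDerivAt_gB_comp hA (hp₁ x hx).1
    have hg₂ : HasDerivAt (fun t => gB A (u₂ t)) (β - u₂ x / x) x :=
      hasDerivAt_gB_comp hA (hp₂ x hx).1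
    exact (hg₁.sub hg₂).pow 2
  have hφanti : AntitoneOn φ (Set.Icc 0 R) := by
    apply antitoneOn_of_deriv_nonpos (convex_Icc 0 R) hφcont
    · rw [interior_Icc]
      intro x hx
      exact ((hφdiff x hx).differentiableAt).differentiableWithinAt
    · rw [interior_Icc]
      intro x hx
      rw [(hφdiff x hx).deriv]
      have hx0 : 0 < x := hx.1
      have hsign : 0 ≤ (gB A (u₁ x) - gB A (u₂ x)) * (u₁ x - u₂ x) := by
        rcases le_total (u₁ x) (u₂ x) with hab | hab
        · have := (gB_strictMono hA).monotone hab
          nlinarith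
        · have := (gB_strictMono hA).monotone hab
          nlinarith
      have hkey : 2 * (gB A (u₁ x) - gB A (u₂ x)) ^ 1 * ((β - u₁ x / x) - (β - u₂ x / x))
          = -(2 * ((gB A (u₁ x) - gB A (u₂ x)) * (u₁ x - u₂ x)) / x) := by
        field_simp
        ring
      rw [hkey]
      have : 0 ≤ 2 * ((gB A (u₁ x) - gB A (u₂ x)) * (u₁ x - u₂ x)) / x :=
        div_nonneg (by linarith) hx0.le
      linarith
  have hφ0 : φ 0 = 0 := by
    simp [hφ_def, hz₁, hz₂]
  have hueq : ∀ t ∈ Set.Icc (0:ℝ) R, u₁ t = u₂ t := by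
    intro t ht
    have h1 : φ t ≤ φ 0 := hφanti (Set.left_mem_Icc.mpr hR.le) ht ht.1
    have h2 : 0 ≤ φ t := sq_nonneg _
    have h3 : φ t = 0 := le_antisymm (by rw [hφ0] at h1; exact h1) h2
    have h4 : gB A (u₁ t) - gB A (u₂ t) = 0 := by
      have := sq_eq_zero_iff.mp h3
      exact this
    exact (gB_strictMono hA).injective (by linarith)
  -- conclude F₁ = F₂
  have hdiffcont : ContinuousOn (fun t => F₁ t - F₂ t) (Set.Icc 0 R) :=
    (h₁.1.continuousOn).sub (h₂.1.continuousOn)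
  have hdiffzero : ∀ x ∈ Set.Ioo (0:ℝ) R,
      HasDerivAt (fun t => F₁ t - F₂ t) 0 x := by
    intro x hx
    have h5 := (hp₁ x hx).2.sub (hp₂ x hx).2
    have heq : derivWithin F₁ (Set.Icc 0 R) x - derivWithin F₂ (Set.Icc 0 R) x = 0 := by
      have := hueq x ⟨hx.1.le, hx.2.le⟩
      simp only [hu₁_def, hu₂_def] at this
      linarith
    rwa [heq] at h5
  have hanti : AntitoneOn (fun t => F₁ t - F₂ t) (Set.Icc 0 R) := by
    apply antitoneOn_of_deriv_nonpos (convex_Icc 0 R) hdiffcont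
    · rw [interior_Icc]
      intro x hx
      exact ((hdiffzero x hx).differentiableAt).differentiableWithinAt
    · rw [interior_Icc]
      intro x hx
      rw [(hdiffzero x hx).deriv]
  have hmono : MonotoneOn (fun t => F₁ t - F₂ t) (Set.Icc 0 R) := by
    apply monotoneOn_of_deriv_nonneg (convex_Icc 0 R) hdiffcont
    · rw [interior_Icc]
      intro x hx
      exact ((hdiffzero x hx).differentiableAt).differentiableWithinAt
    · rw [interior_Icc]
      intro x hx
      rw [(hdiffzero x hx).deriv]
  intro t ht
  have h0m : (0:ℝ) ∈ Set.Icc 0 R := Set.left_mem_Icc.mpr hR.le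
  have h1 := hanti h0m ht ht.1
  have h2 := hmono h0m ht ht.1
  have h3 : F₁ 0 - F₂ 0 = 0 := by rw [h₁.2.1, h₂.2.1]; ring
  simp only at h1 h2
  have : F₁ t - F₂ t = 0 := le_antisymm (by linarith) (by linarith)
  linarith
end

section
/- If F is a C² solution on [0, R] of F''/(1 + (F')²/A⁴) + F'/ζ = β with F(0) = F'(0) = 0, A > 0, and β > 0, then F'(ζ) > 0 for all ζ ∈ (0, R]; in particular F is strictly increasing on [0, R]. -/
open Set Filter Topology

/-- If a function has a positive derivative at `c`, then just to the left of `c`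
its values are smaller than at `c`. -/
lemma left_lt_of_deriv_pos' {φ : ℝ → ℝ} {c d : ℝ} (h : HasDerivAt φ d c) (hd : 0 < d) :
    ∀ᶠ x in 𝓝[<] c, φ x < φ c := by
  have hs := hasDerivAt_iff_tendsto_slope.1 h
  have h1 : ∀ᶠ x in 𝓝[≠] c, 0 < slope φ c x := hs.eventually (eventually_gt_nhds hd)
  have hmono : 𝓝[<] c ≤ 𝓝[≠] c :=
    nhdsWithin_mono c (fun x (hx : x ∈ Iio c) => (ne_of_lt hx : x ≠ c))
  have h2 : ∀ᶠ x in 𝓝[<] c, 0 < slope φ c x := h1.filter_mono hmono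
  filter_upwards [h2, self_mem_nhdsWithin] with x hx hxc
  have hxc' : x - c < 0 := sub_neg.2 hxc
  rw [slope_def_field] at hx
  rcases div_pos_iff.1 hx with ⟨hp, hq⟩ | ⟨hp, hq⟩
  · linarith
  · linarith

theorem stmt_5 (A β R : ℝ) (hA : 0 < A) (hβ : 0 < β) (hR : 0 < R) (F : ℝ → ℝ)
    (hF : ContDiffOn ℝ 2 F (Set.Icc 0 R)) (hF0 : F 0 = 0) (hF'0 : deriv F 0 = 0)
    (hode : ∀ ζ ∈ Set.Ioc (0 : ℝ) R,
      deriv (deriv F) ζ / (1 + (deriv F ζ) ^ 2 / A ^ 4) + deriv F ζ / ζ = β) :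
    (∀ ζ ∈ Set.Ioc (0 : ℝ) R, 0 < deriv F ζ) ∧ StrictMonoOn F (Set.Icc 0 R) := by
  have hA4 : (0:ℝ) < A ^ 4 := by positivity
  have hudiff : UniqueDiffOn ℝ (Icc (0:ℝ) R) := uniqueDiffOn_Icc hR
  set g : ℝ → ℝ := derivWithin F (Icc 0 R) with hgdef
  have hg1 : ContDiffOn ℝ 1 g (Icc 0 R) := hF.derivWithin hudiff (by norm_num)
  have hgc : ContinuousOn g (Icc 0 R) := hg1.continuousOn
  have hgd : ∀ x ∈ Ioo (0:ℝ) R, DifferentiableAt ℝ g x := fun x hx =>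
    (hg1.differentiableOn one_ne_zero x (Ioo_subset_Icc_self hx)).differentiableAt
      (Icc_mem_nhds hx.1 hx.2)
  have hFg : ∀ x ∈ Ioo (0:ℝ) R, deriv F x = g x := fun x hx =>
    (derivWithin_of_mem_nhds (Icc_mem_nhds hx.1 hx.2)).symm
  have hEE : ∀ x ∈ Ioo (0:ℝ) R, deriv F =ᶠ[𝓝 x] g := fun x hx =>
    eventuallyEq_of_mem (Ioo_mem_nhds hx.1 hx.2) (fun y hy => hFg y hy)
  -- The ODE rewritten for g
  have hode' : ∀ x ∈ Ioo (0:ℝ) R, deriv g x = (β - g x / x) * (1 + (g x) ^ 2 / A ^ 4) := by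
    intro x hx
    have h1 := hode x ⟨hx.1, hx.2.le⟩
    rw [hFg x hx, (hEE x hx).deriv_eq] at h1
    have hD : (0:ℝ) < 1 + (g x) ^ 2 / A ^ 4 := by positivity
    have hx0 : x ≠ 0 := ne_of_gt hx.1
    field_simp at h1 ⊢
    nlinarith [h1]
  -- derivative of h y = y * g y
  have hh : ∀ x ∈ Ioo (0:ℝ) R, HasDerivAt (fun y => y * g y) (g x + x * deriv g x) x := by
    intro x hx
    have := (hasDerivAt_id' x).mul ((hgd x hx).hasDerivAt)
    simpa [Pi.mul_def] using this
  -- nonnegativity of g on (0, R)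
  have key : ∀ z ∈ Ioo (0:ℝ) R, 0 ≤ g z := by
    intro z hz
    by_contra hneg
    push_neg at hneg
    set h : ℝ → ℝ := fun y => y * g y with hhdef
    have hic : Icc (0:ℝ) z ⊆ Icc 0 R := Icc_subset_Icc le_rfl hz.2.le
    have hhc : ContinuousOn h (Icc 0 z) := continuousOn_id.mul (hgc.mono hic)
    obtain ⟨c, hcmem, hcmin⟩ :=
      isCompact_Icc.exists_isMinOn (nonempty_Icc.2 hz.1.le) hhc
    rw [isMinOn_iff] at hcmin
    have hhz : h z < 0 := mul_neg_of_pos_of_neg hz.1 hneg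
    have hc0 : h c < 0 := lt_of_le_of_lt (hcmin z (right_mem_Icc.2 hz.1.le)) hhz
    have hcpos : 0 < c := by
      rcases hcmem.1.lt_or_eq with h' | h'
      · exact h'
      · exfalso; rw [← h'] at hc0; simp [hhdef] at hc0
    have hgcneg : g c < 0 := by
      by_contra hge
      push_neg at hge
      exact absurd hc0 (not_lt.2 (mul_nonneg hcpos.le hge))
    have hcR : c ∈ Ioo (0:ℝ) R := ⟨hcpos, lt_of_le_of_lt hcmem.2 hz.2⟩
    have hder := hh c hcR
    have hq : (0:ℝ) ≤ (g c) ^ 2 / A ^ 4 := by positivity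
    have hdpos : 0 < g c + c * deriv g c := by
      rw [hode' c hcR]
      have e1 : c * ((β - g c / c) * (1 + (g c) ^ 2 / A ^ 4))
          = (c * β - g c) * (1 + (g c) ^ 2 / A ^ 4) := by
        field_simp
      rw [e1]
      nlinarith [mul_nonneg (by nlinarith [mul_pos hβ hcpos] : (0:ℝ) ≤ c * β - g c) hq,
        mul_pos hβ hcpos]
    have hev := (left_lt_of_deriv_pos' hder hdpos).and
      (eventually_of_mem (Ioo_mem_nhdsLT_of_mem (⟨hcpos, le_rfl⟩ : c ∈ Ioc 0 c))
        (fun y hy => hy))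
    obtain ⟨x, hxlt, hxm⟩ := hev.exists
    have hxmem : x ∈ Icc (0:ℝ) z := ⟨hxm.1.le, hxm.2.le.trans hcmem.2⟩
    exact absurd (hcmin x hxmem) (not_le.2 hxlt)
  -- strict positivity of g on (0, R)
  have hpos : ∀ z ∈ Ioo (0:ℝ) R, 0 < g z := by
    intro z hz
    rcases (key z hz).lt_or_eq with h' | h'
    · exact h'
    · exfalso
      have hmin : IsLocalMin g z := by
        filter_upwards [Ioo_mem_nhds hz.1 hz.2] with y hy
        rw [← h']
        exact key y hy
      have hd0 := hmin.deriv_eq_zero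
      rw [hode' z hz, ← h'] at hd0
      simp at hd0
      exact absurd hd0 (ne_of_gt hβ)
  -- positivity at the right endpoint
  have hRpos : 0 < deriv F R := by
    by_contra hc
    push_neg at hc
    have hodeR := hode R ⟨hR, le_rfl⟩
    have hD : (0:ℝ) < 1 + (deriv F R) ^ 2 / A ^ 4 := by positivity
    have hR0 : R ≠ 0 := ne_of_gt hR
    have hd : deriv (deriv F) R = (β - deriv F R / R) * (1 + (deriv F R) ^ 2 / A ^ 4) := by
      field_simp at hodeR ⊢
      nlinarith [hodeR]
    have hdpos : 0 < deriv (deriv F) R := by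
      rw [hd]
      have h1 : deriv F R / R ≤ 0 := div_nonpos_of_nonpos_of_nonneg hc hR.le
      nlinarith
    have hdiff : DifferentiableAt ℝ (deriv F) R := by
      by_contra hnd
      rw [deriv_zero_of_not_differentiableAt hnd] at hdpos
      exact lt_irrefl 0 hdpos
    haveI : (𝓝[Ioo (0:ℝ) R] R).NeBot := by
      rw [nhdsWithin_Ioo_eq_nhdsLT hR]; infer_instance
    have hlim1 : Tendsto (deriv F) (𝓝[Ioo (0:ℝ) R] R) (𝓝 (deriv F R)) :=
      (hdiff.continuousAt.continuousWithinAt).tendsto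
    have hlim1' : Tendsto g (𝓝[Ioo (0:ℝ) R] R) (𝓝 (deriv F R)) := by
      apply hlim1.congr'
      filter_upwards [self_mem_nhdsWithin] with y hy
      exact hFg y hy
    have hlim2 : Tendsto g (𝓝[Ioo (0:ℝ) R] R) (𝓝 (g R)) :=
      ((hgc R (right_mem_Icc.2 hR.le)).mono Ioo_subset_Icc_self).tendsto
    have huniq : deriv F R = g R := tendsto_nhds_unique hlim1' hlim2
    have hgR : 0 ≤ g R :=
      ge_of_tendsto hlim2 (eventually_of_mem self_mem_nhdsWithin (fun y hy => key y hy))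
    have hc0 : deriv F R = 0 := le_antisymm hc (huniq ▸ hgR)
    have hev := (left_lt_of_deriv_pos' hdiff.hasDerivAt hdpos).and
      (eventually_of_mem (Ioo_mem_nhdsLT_of_mem (⟨hR, le_rfl⟩ : R ∈ Ioc 0 R))
        (fun y hy => hy))
    haveI : (𝓝[<] R).NeBot := inferInstance
    obtain ⟨x, hxlt, hxm⟩ := hev.exists
    rw [hc0, hFg x hxm] at hxlt
    exact absurd (key x hxm) (not_le.2 hxlt)
  constructor
  · intro ζ hζ
    rcases hζ.2.lt_or_eq with h' | h'
    · rw [hFg ζ ⟨hζ.1, h'⟩]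
      exact hpos ζ ⟨hζ.1, h'⟩
    · rw [h']
      exact hRpos
  · apply strictMonoOn_of_deriv_pos (convex_Icc 0 R) hF.continuousOn
    intro x hx
    rw [interior_Icc] at hx
    rw [hFg x hx]
    exact hpos x hx
end
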